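/- With a₀ = (1/(2ε)) cosh(κε), b₀ = 1/(2ε), and the recursion b_k = b₀ b_{k-1}/(a₀ + a_{k-1}), a_{k-1} = √(b_{k-1}² + a₀² - b₀²), one has the closed form b_k = (1/(2ε)) · sinh(κε)/sinh((k+1)κε) for all k ≥ 0. -/

import Mathlib

theorem stmt_7 (κ ε : ℝ) (hε : 0 < ε) (hκ : 0 < κ) (b : ℕ → ℝ)
    (hb0 : b 0 = 1 / (2 * ε))
    (hrec : ∀ k, b (k + 1) =
      (1 / (2 * ε)) * b k /
        (Real.cosh (κ * ε) / (2 * ε) +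
          Real.sqrt ((b k) ^ 2 + (Real.cosh (κ * ε) / (2 * ε)) ^ 2 - (1 / (2 * ε)) ^ 2))) :
    ∀ k : ℕ, b k = (1 / (2 * ε)) * Real.sinh (κ * ε) / Real.sinh ((k + 1) * κ * ε) := by
  have hx : 0 < κ * ε := mul_pos hκ hε
  have hs : 0 < Real.sinh (κ * ε) := Real.sinh_pos_iff.2 hx
  have hc : 0 < Real.cosh (κ * ε) := Real.cosh_pos _
  intro k
  induction k with
  | zero =>
    simp only [Nat.cast_zero]
    rw [show ((0:ℝ) + 1) * κ * ε = κ * ε by ring, hb0, mul_div_assoc,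
      div_self hs.ne', mul_one]
  | succ n ih =>
    set x := κ * ε with hxdef
    have hSn : 0 < Real.sinh ((n + 1) * x) := by
      apply Real.sinh_pos_iff.2; positivity
    have hCn : 0 < Real.cosh ((n + 1) * x) := Real.cosh_pos _
    have h1 : Real.cosh x ^ 2 = Real.sinh x ^ 2 + 1 := Real.cosh_sq x
    have h2 : Real.cosh ((n + 1) * x) ^ 2 = Real.sinh ((n + 1) * x) ^ 2 + 1 :=
      Real.cosh_sq _
    have hih : b n = (1 / (2 * ε)) * Real.sinh x / Real.sinh ((n + 1) * x) := by
      rw [ih, mul_assoc ((n:ℝ)+1) κ ε]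
    have hsq : Real.sqrt ((b n) ^ 2 + (Real.cosh x / (2 * ε)) ^ 2 - (1 / (2 * ε)) ^ 2)
        = (1 / (2 * ε)) * Real.sinh x * Real.cosh ((n + 1) * x) / Real.sinh ((n + 1) * x) := by
      have hval : (b n) ^ 2 + (Real.cosh x / (2 * ε)) ^ 2 - (1 / (2 * ε)) ^ 2
          = ((1 / (2 * ε)) * Real.sinh x * Real.cosh ((n + 1) * x) / Real.sinh ((n + 1) * x)) ^ 2 := by
        rw [hih]
        field_simp
        linear_combination Real.sinh ((↑n+1)*x)^2 * h1 -
          (Real.sinh x)^2 * h2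
      rw [hval, Real.sqrt_sq (by positivity)]
    have hadd : Real.sinh ((n + 2) * x)
        = Real.sinh ((n + 1) * x) * Real.cosh x + Real.cosh ((n + 1) * x) * Real.sinh x := by
      rw [show ((n : ℝ) + 2) * x = (n + 1) * x + x by ring, Real.sinh_add]
    rw [hrec n, hsq, hih]
    push_cast
    rw [show ((n : ℝ) + 1 + 1) * κ * ε = ((n : ℝ) + 2) * x by rw [hxdef]; ring, hadd]
    have hD : (0:ℝ) < Real.sinh ((n + 1) * x) * Real.cosh x + Real.cosh ((n + 1) * x) * Real.sinh x := by
      positivity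
    field_simp
    try exact Or.inl trivial
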